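/- For an open-graph M, a monomorphism m : G → M where G has no isolated points, and the subtraction H := M −ₘ G with coboundary c : B → H, the square formed by the boundary map b : B → G, the coboundary c, m, and the induced inclusion of H into M is an S-adhesive pushout. Hence subtraction computes an S-adhesive pushout complement, and H is the unique open-graph such that plugging G and H along (b, c) recovers M. -/

import Mathlib

open CategoryTheory Limits

/-! Directed graphs as `E ⇉ P` data, the type graph `2_G`, the slice category of
`2_G`-typed graphs, and the category `OGraph` of open-graphs. -/

structure PreGraph : Type 1 where
  E : Type
  P : Type
  s : E → P
  t : E → P

/-- The points of the type graph `2_G`: vertices `V` and edge-points `ε`. -/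
inductive TyP : Type
  | V : TyP
  | eps : TyP
  deriving DecidableEq

/-- The edges of the type graph `2_G`: `V → ε`, `ε → V` and the loop on `ε`. -/
inductive TyE : Type
  | ve : TyE
  | ev : TyE
  | loop : TyE
  deriving DecidableEq

/-- The type graph `2_G`. -/
def twoG : PreGraph where
  E := TyE
  P := TyP
  s e := match e with | .ve => .V | .ev => .eps | .loop => .eps
  t e := match e with | .ve => .eps | .ev => .V | .loop => .eps

structure GraphHom (G H : PreGraph) : Type where
  pe : G.E → H.E
  pp : G.P → H.P
  hs : ∀ e, H.s (pe e) = pp (G.s e)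
  ht : ∀ e, H.t (pe e) = pp (G.t e)

def GraphHom.idHom (G : PreGraph) : GraphHom G G :=
  ⟨fun e => e, fun p => p, fun _ => rfl, fun _ => rfl⟩

def GraphHom.comp {G H K : PreGraph} (f : GraphHom G H) (g : GraphHom H K) :
    GraphHom G K :=
  ⟨fun e => g.pe (f.pe e), fun p => g.pp (f.pp p),
   fun e => by rw [g.hs, f.hs], fun e => by rw [g.ht, f.ht]⟩

/-- An object of the slice category `Graph/2_G`: a graph together with a typing
morphism into `2_G`. -/
structure TypedGraph : Type 1 where
  G : PreGraph
  τ : GraphHom G twoG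

/-- A morphism of `2_G`-typed graphs: a graph morphism commuting with the typing. -/
@[ext]
structure TypedHom (X Y : TypedGraph) : Type where
  h : GraphHom X.G Y.G
  comm_pp : ∀ p, Y.τ.pp (h.pp p) = X.τ.pp p
  comm_pe : ∀ e, Y.τ.pe (h.pe e) = X.τ.pe e

def TypedHom.idHom (X : TypedGraph) : TypedHom X X :=
  ⟨GraphHom.idHom X.G, fun _ => rfl, fun _ => rfl⟩

def TypedHom.comp {X Y Z : TypedGraph} (f : TypedHom X Y) (g : TypedHom Y Z) :
    TypedHom X Z :=
  ⟨f.h.comp g.h,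
   fun p => by show Z.τ.pp (g.h.pp (f.h.pp p)) = _; rw [g.comm_pp, f.comm_pp],
   fun e => by show Z.τ.pe (g.h.pe (f.h.pe e)) = _; rw [g.comm_pe, f.comm_pe]⟩

instance : Category TypedGraph where
  Hom := TypedHom
  id := TypedHom.idHom
  comp := TypedHom.comp
  id_comp _ := rfl
  comp_id _ := rfl
  assoc _ _ _ := rfl

/-- An open-graph: a `2_G`-typed graph in which every edge-point has at most one
in-edge and at most one out-edge. -/
structure OGraph : Type 1 where
  X : TypedGraph
  open_in : ∀ p, X.τ.pp p = TyP.eps →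
    ∀ e₁ e₂, X.G.t e₁ = p → X.G.t e₂ = p → e₁ = e₂
  open_out : ∀ p, X.τ.pp p = TyP.eps →
    ∀ e₁ e₂, X.G.s e₁ = p → X.G.s e₂ = p → e₁ = e₂

/-- A typed-graph morphism is full on vertices when every edge adjacent to the image
`f(v)` of a vertex `v` is the image of an edge adjacent to `v`. -/
def FullOnVertices {X Y : TypedGraph} (f : TypedHom X Y) : Prop :=
  ∀ v, X.τ.pp v = TyP.V → ∀ e, (Y.G.s e = f.h.pp v ∨ Y.G.t e = f.h.pp v) →
    ∃ e', f.h.pe e' = e ∧ (X.G.s e' = v ∨ X.G.t e' = v)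

/-- A morphism of open-graphs: a typed-graph morphism that is full on vertices. -/
@[ext]
structure OHom (G H : OGraph) : Type where
  f : TypedHom G.X H.X
  full : FullOnVertices f

theorem fullOnVertices_id (G : OGraph) : FullOnVertices (TypedHom.idHom G.X) :=
  fun _ _ e he => ⟨e, rfl, he⟩

theorem fullOnVertices_comp {G H K : OGraph} (f : TypedHom G.X H.X)
    (g : TypedHom H.X K.X) (hf : FullOnVertices f) (hg : FullOnVertices g) :
    FullOnVertices (f.comp g) := by
  intro v hv e he
  have hfv : H.X.τ.pp (f.h.pp v) = TyP.V := by rw [f.comm_pp]; exact hv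
  obtain ⟨e', he', hadj'⟩ := hg (f.h.pp v) hfv e he
  obtain ⟨e'', he'', hadj''⟩ := hf v hv e' hadj'
  exact ⟨e'', by show g.h.pe (f.h.pe e'') = e; rw [he'', he'], hadj''⟩

def OHom.idHom (G : OGraph) : OHom G G := ⟨TypedHom.idHom G.X, fullOnVertices_id G⟩

def OHom.comp {G H K : OGraph} (φ : OHom G H) (ψ : OHom H K) : OHom G K :=
  ⟨φ.f.comp ψ.f, fullOnVertices_comp φ.f ψ.f φ.full ψ.full⟩

instance : Category OGraph where
  Hom := OHom
  id := OHom.idHom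
  comp := OHom.comp
  id_comp _ := rfl
  comp_id _ := rfl
  assoc _ _ _ := rfl

/-- The point map of an open-graph morphism. -/
def OHom.pp {G H : OGraph} (φ : OHom G H) : G.X.G.P → H.X.G.P := φ.f.h.pp

/-- The edge map of an open-graph morphism. -/
def OHom.pe {G H : OGraph} (φ : OHom G H) : G.X.G.E → H.X.G.E := φ.f.h.pe

/-- The embedding functor `S : OGraph ⥤ Graph/2_G`. -/
def S : OGraph ⥤ TypedGraph where
  obj G := G.X
  map f := f.f
  map_id _ := rfl
  map_comp _ _ := rfl

/-- An edge-point of an open-graph. -/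
def IsEdgePoint (G : OGraph) (p : G.X.G.P) : Prop := G.X.τ.pp p = TyP.eps

/-- An input: an edge-point with no in-edges. -/
def IsInput (G : OGraph) (p : G.X.G.P) : Prop :=
  IsEdgePoint G p ∧ ∀ e, G.X.G.t e ≠ p

/-- An output: an edge-point with no out-edges. -/
def IsOutput (G : OGraph) (p : G.X.G.P) : Prop :=
  IsEdgePoint G p ∧ ∀ e, G.X.G.s e ≠ p

/-- The boundary graph of `G`: the point graph `In(G) + Out(G)`. -/
def boundaryGraph (G : OGraph) : OGraph where
  X := { G := { E := Empty
                P := {p // IsInput G p} ⊕ {p // IsOutput G p}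
                s := fun e => e.elim
                t := fun e => e.elim }
         τ := { pe := fun e => e.elim
                pp := fun _ => TyP.eps
                hs := fun e => e.elim
                ht := fun e => e.elim } }
  open_in := fun _ _ e => e.elim
  open_out := fun _ _ e => e.elim

/-- The boundary map `b : In(G) + Out(G) ⟶ G`. -/
def boundaryMap (G : OGraph) : boundaryGraph G ⟶ G :=
  OHom.mk
    (TypedHom.mk
      (GraphHom.mk (fun e => e.elim)
        (fun p => Sum.elim (fun q => q.val) (fun q => q.val) p)
        (fun e => e.elim) (fun e => e.elim))
      (by rintro (⟨p, hp⟩ | ⟨p, hp⟩) <;> exact hp.1)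
      (fun e => e.elim))
    (by rintro (⟨p, hp⟩ | ⟨p, hp⟩) hv <;> exact absurd hv (by simp [boundaryGraph]))

/-- An isolated point: both an input and an output. -/
def IsIsolated (G : OGraph) (p : G.X.G.P) : Prop := IsInput G p ∧ IsOutput G p

/-- A point graph: an open-graph consisting only of (isolated) edge-points. -/
def IsPointGraph (G : OGraph) : Prop :=
  (∀ p, IsEdgePoint G p) ∧ (G.X.G.E → False)

/-- A boundary-coherent span of open-graphs. -/
def BoundaryCoherent {G H₁ H₂ : OGraph} (f : G ⟶ H₁) (g : G ⟶ H₂) : Prop :=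
  Mono f ∧ Mono g ∧
  (∀ p, IsInput G p → ¬(IsInput H₁ (OHom.pp f p) ∧ IsInput H₂ (OHom.pp g p))) ∧
  (∀ p, IsOutput G p → ¬(IsOutput H₁ (OHom.pp f p) ∧ IsOutput H₂ (OHom.pp g p)))

namespace SubtractionProof

/-! ### Extensionality lemmas -/

theorem ghom_ext {A B : PreGraph} {f g : GraphHom A B}
    (h1 : ∀ e, f.pe e = g.pe e) (h2 : ∀ p, f.pp p = g.pp p) : f = g := by
  cases f; cases g
  have e1 : _ = _ := funext h1
  have e2 : _ = _ := funext h2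
  dsimp at e1 e2
  subst e1; subst e2; rfl

theorem thom_ext {X Y : TypedGraph} {f g : TypedHom X Y}
    (h1 : ∀ e, f.h.pe e = g.h.pe e) (h2 : ∀ p, f.h.pp p = g.h.pp p) : f = g := by
  cases f; cases g
  have : _ = _ := ghom_ext h1 h2
  dsimp at this
  subst this; rfl

theorem ohom_ext {A B : OGraph} {f g : A ⟶ B}
    (h1 : ∀ e, OHom.pe f e = OHom.pe g e) (h2 : ∀ p, OHom.pp f p = OHom.pp g p) : f = g := by
  exact OHom.ext (thom_ext h1 h2)

/-- An edge has at most one vertex-typed endpoint. -/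
theorem vertex_endpoint_unique (A : OGraph) (e : A.X.G.E) {v w : A.X.G.P}
    (hv : A.X.τ.pp v = TyP.V) (hw : A.X.τ.pp w = TyP.V)
    (h1 : A.X.G.s e = v ∨ A.X.G.t e = v) (h2 : A.X.G.s e = w ∨ A.X.G.t e = w) : v = w := by
  have hs := A.X.τ.hs e
  have ht := A.X.τ.ht e
  have key : ∀ x : TyE, twoG.s x = TyP.V → twoG.t x = TyP.V → False := by
    intro x hx hy; cases x <;> simp [twoG] at hx hy
  rcases h1 with h1 | h1 <;> rcases h2 with h2 | h2
  · rw [← h1, ← h2]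
  · exact (key _ (hs.trans (by rw [h1]; exact hv)) (ht.trans (by rw [h2]; exact hw))).elim
  · exact (key _ (hs.trans (by rw [h2]; exact hw)) (ht.trans (by rw [h1]; exact hv))).elim
  · rw [← h1, ← h2]

theorem mhs {A B : OGraph} (m : A ⟶ B) (e : A.X.G.E) :
    B.X.G.s (OHom.pe m e) = OHom.pp m (A.X.G.s e) := m.f.h.hs e

theorem mht {A B : OGraph} (m : A ⟶ B) (e : A.X.G.E) :
    B.X.G.t (OHom.pe m e) = OHom.pp m (A.X.G.t e) := m.f.h.ht e

theorem mcpp {A B : OGraph} (m : A ⟶ B) (p : A.X.G.P) :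
    B.X.τ.pp (OHom.pp m p) = A.X.τ.pp p := m.f.comm_pp p

theorem mcpe {A B : OGraph} (m : A ⟶ B) (e : A.X.G.E) :
    B.X.τ.pe (OHom.pe m e) = A.X.τ.pe e := m.f.comm_pe e

/-! ### Mono implies injective -/

/-- The single-edge-point probe graph. -/
def ptG : OGraph where
  X := { G := { E := Empty, P := PUnit, s := fun e => e.elim, t := fun e => e.elim }
         τ := { pe := fun e => e.elim, pp := fun _ => TyP.eps,
                hs := fun e => e.elim, ht := fun e => e.elim } }
  open_in := fun _ _ e => e.elim
  open_out := fun _ _ e => e.elim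

/-- The morphism from the probe picking an edge-point. -/
def pickEps {A : OGraph} (p : A.X.G.P) (hp : A.X.τ.pp p = TyP.eps) : ptG ⟶ A :=
  OHom.mk
    (TypedHom.mk (GraphHom.mk (fun e => e.elim) (fun _ => p)
      (fun e => e.elim) (fun e => e.elim))
      (fun _ => hp) (fun e => e.elim))
    (fun _ hv => by exact absurd hv (by simp [ptG]))

theorem mono_pp_inj_eps {A B : OGraph} (m : A ⟶ B) (hm : Mono m)
    {p q : A.X.G.P} (hp : A.X.τ.pp p = TyP.eps) (hq : A.X.τ.pp q = TyP.eps)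
    (h : OHom.pp m p = OHom.pp m q) : p = q := by
  have : pickEps p hp ≫ m = pickEps q hq ≫ m := ohom_ext (fun e => e.elim) (fun _ => h)
  have := (cancel_mono m).mp this
  exact congrArg (fun (f : ptG ⟶ A) => OHom.pp f PUnit.unit) this

theorem mono_pe_inj {A B : OGraph} (m : A ⟶ B) (hm : Mono m) :
    Function.Injective (OHom.pe m) := by
  intro e₁ e₂ h
  have hty : A.X.τ.pe e₁ = A.X.τ.pe e₂ := by
    have c1 := m.f.comm_pe e₁
    have c2 := m.f.comm_pe e₂
    rw [← c1, ← c2]; exact congrArg B.X.τ.pe h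
  have hsM : ∀ e, B.X.G.s (OHom.pe m e) = OHom.pp m (A.X.G.s e) := m.f.h.hs
  have htM : ∀ e, B.X.G.t (OHom.pe m e) = OHom.pp m (A.X.G.t e) := m.f.h.ht
  -- every edge has an eps endpoint on a definite side depending on its type
  cases hty2 : A.X.τ.pe e₁ with
  | ve =>
    -- target is eps for both
    have ht1 : A.X.τ.pp (A.X.G.t e₁) = TyP.eps := by
      rw [← A.X.τ.ht e₁, hty2]; rfl
    have ht2 : A.X.τ.pp (A.X.G.t e₂) = TyP.eps := by
      rw [← A.X.τ.ht e₂, ← hty, hty2]; rfl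
    have heq : A.X.G.t e₁ = A.X.G.t e₂ :=
      mono_pp_inj_eps m hm ht1 ht2 (by rw [← htM, ← htM, h])
    exact A.open_in (A.X.G.t e₂) ht2 e₁ e₂ heq rfl
  | ev =>
    have ht1 : A.X.τ.pp (A.X.G.s e₁) = TyP.eps := by
      rw [← A.X.τ.hs e₁, hty2]; rfl
    have ht2 : A.X.τ.pp (A.X.G.s e₂) = TyP.eps := by
      rw [← A.X.τ.hs e₂, ← hty, hty2]; rfl
    have heq : A.X.G.s e₁ = A.X.G.s e₂ :=
      mono_pp_inj_eps m hm ht1 ht2 (by rw [← hsM, ← hsM, h])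
    exact A.open_out (A.X.G.s e₂) ht2 e₁ e₂ heq rfl
  | loop =>
    have ht1 : A.X.τ.pp (A.X.G.s e₁) = TyP.eps := by
      rw [← A.X.τ.hs e₁, hty2]; rfl
    have ht2 : A.X.τ.pp (A.X.G.s e₂) = TyP.eps := by
      rw [← A.X.τ.hs e₂, ← hty, hty2]; rfl
    have heq : A.X.G.s e₁ = A.X.G.s e₂ :=
      mono_pp_inj_eps m hm ht1 ht2 (by rw [← hsM, ← hsM, h])
    exact A.open_out (A.X.G.s e₂) ht2 e₁ e₂ heq rfl
/-- The neighborhood of a point `v`: `v`, its adjacent edges and their endpoints. -/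
def nbhd (A : OGraph) (v : A.X.G.P) : OGraph where
  X := { G := { E := {e // A.X.G.s e = v ∨ A.X.G.t e = v}
                P := {p // p = v ∨ ∃ e, (A.X.G.s e = v ∨ A.X.G.t e = v) ∧
                        (A.X.G.s e = p ∨ A.X.G.t e = p)}
                s := fun e => ⟨A.X.G.s e.val, Or.inr ⟨e.val, e.2, Or.inl rfl⟩⟩
                t := fun e => ⟨A.X.G.t e.val, Or.inr ⟨e.val, e.2, Or.inr rfl⟩⟩ }
         τ := { pe := fun e => A.X.τ.pe e.val, pp := fun p => A.X.τ.pp p.val,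
                hs := fun e => A.X.τ.hs e.val, ht := fun e => A.X.τ.ht e.val } }
  open_in := fun p hp e₁ e₂ h1 h2 => Subtype.ext
    (A.open_in p.val hp e₁.val e₂.val (congrArg Subtype.val h1) (congrArg Subtype.val h2))
  open_out := fun p hp e₁ e₂ h1 h2 => Subtype.ext
    (A.open_out p.val hp e₁.val e₂.val (congrArg Subtype.val h1) (congrArg Subtype.val h2))

theorem mono_pp_inj_V {A B : OGraph} (m : A ⟶ B) (hm : Mono m)
    {v w : A.X.G.P} (hv : A.X.τ.pp v = TyP.V) (hw : A.X.τ.pp w = TyP.V)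
    (h : OHom.pp m v = OHom.pp m w) : v = w := by
  classical
  have hτe : ∀ f g, OHom.pe m f = OHom.pe m g → A.X.τ.pe f = A.X.τ.pe g := fun f g hfg => by
    rw [← m.f.comm_pe f, ← m.f.comm_pe g]; exact congrArg B.X.τ.pe hfg
  have hex : ∀ e' : (nbhd A v).X.G.E,
      ∃ f, OHom.pe m f = OHom.pe m e'.val ∧ (A.X.G.s f = w ∨ A.X.G.t f = w) := by
    rintro ⟨e, he⟩
    have hadj : B.X.G.s (OHom.pe m e) = OHom.pp m w ∨ B.X.G.t (OHom.pe m e) = OHom.pp m w := by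
      rcases he with he | he
      · exact Or.inl (by show B.X.G.s (m.f.h.pe e) = m.f.h.pp w; rw [m.f.h.hs, he]; exact h)
      · exact Or.inr (by show B.X.G.t (m.f.h.pe e) = m.f.h.pp w; rw [m.f.h.ht, he]; exact h)
    exact m.full w hw (OHom.pe m e) hadj
  obtain ⟨θ, hθpe, hθpp⟩ : ∃ θ : nbhd A v ⟶ A,
      (∀ e', OHom.pe θ e' = (hex e').choose) ∧
      (∀ p, OHom.pp θ p = if p.val = v then w else p.val) := by
    refine ⟨⟨⟨⟨fun e' => (hex e').choose, fun p => if p.val = v then w else p.val,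
      ?_, ?_⟩, ?_, ?_⟩, ?_⟩, fun _ => rfl, fun _ => rfl⟩
    · -- hs
      intro e'
      obtain ⟨hf1, hf2⟩ := (hex e').choose_spec
      set f := (hex e').choose with hfdef
      show A.X.G.s f = if A.X.G.s e'.val = v then w else A.X.G.s e'.val
      by_cases hsv : A.X.G.s e'.val = v
      · rw [if_pos hsv]
        have h1 : A.X.τ.pp (A.X.G.s f) = TyP.V := by
          rw [← A.X.τ.hs f, hτe f e'.val hf1, A.X.τ.hs e'.val, hsv]; exact hv
        exact vertex_endpoint_unique A f h1 hw (Or.inl rfl) hf2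
      · rw [if_neg hsv]
        have htv : A.X.G.t e'.val = v := e'.2.resolve_left hsv
        have heps : A.X.τ.pp (A.X.G.s e'.val) = TyP.eps := by
          have h2 : twoG.t (A.X.τ.pe e'.val) = TyP.V := by rw [A.X.τ.ht, htv]; exact hv
          have h3 : twoG.s (A.X.τ.pe e'.val) = TyP.eps := by
            cases hte : A.X.τ.pe e'.val <;> rw [hte] at h2 <;>
              first | rfl | (exact absurd h2 (by simp [twoG]))
          rw [← A.X.τ.hs]; exact h3
        have heps2 : A.X.τ.pp (A.X.G.s f) = TyP.eps := by
          rw [← A.X.τ.hs f, hτe f e'.val hf1, A.X.τ.hs]; exact heps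
        apply mono_pp_inj_eps m hm heps2 heps
        show m.f.h.pp _ = m.f.h.pp _
        rw [← m.f.h.hs, ← m.f.h.hs]
        exact congrArg B.X.G.s hf1
    · -- ht
      intro e'
      obtain ⟨hf1, hf2⟩ := (hex e').choose_spec
      set f := (hex e').choose with hfdef
      show A.X.G.t f = if A.X.G.t e'.val = v then w else A.X.G.t e'.val
      by_cases htv : A.X.G.t e'.val = v
      · rw [if_pos htv]
        have h1 : A.X.τ.pp (A.X.G.t f) = TyP.V := by
          rw [← A.X.τ.ht f, hτe f e'.val hf1, A.X.τ.ht e'.val, htv]; exact hv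
        exact vertex_endpoint_unique A f h1 hw (Or.inr rfl) hf2
      · rw [if_neg htv]
        have hsv : A.X.G.s e'.val = v := e'.2.resolve_right htv
        have heps : A.X.τ.pp (A.X.G.t e'.val) = TyP.eps := by
          have h2 : twoG.s (A.X.τ.pe e'.val) = TyP.V := by rw [A.X.τ.hs, hsv]; exact hv
          have h3 : twoG.t (A.X.τ.pe e'.val) = TyP.eps := by
            cases hte : A.X.τ.pe e'.val <;> rw [hte] at h2 <;>
              first | rfl | (exact absurd h2 (by simp [twoG]))
          rw [← A.X.τ.ht]; exact h3
        have heps2 : A.X.τ.pp (A.X.G.t f) = TyP.eps := by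
          rw [← A.X.τ.ht f, hτe f e'.val hf1, A.X.τ.ht]; exact heps
        apply mono_pp_inj_eps m hm heps2 heps
        show m.f.h.pp _ = m.f.h.pp _
        rw [← m.f.h.ht, ← m.f.h.ht]
        exact congrArg B.X.G.t hf1
    · -- comm_pp
      intro p
      show A.X.τ.pp (if p.val = v then w else p.val) = A.X.τ.pp p.val
      by_cases hpv : p.val = v
      · rw [if_pos hpv, hw, hpv, hv]
      · rw [if_neg hpv]
    · -- comm_pe
      exact fun e' => hτe _ _ (hex e').choose_spec.1
    · -- fullness
      intro p hp g hg
      have hpv : p.val = v := by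
        rcases p.2 with hpv | ⟨e0, he0, hpe0⟩
        · exact hpv
        · exact vertex_endpoint_unique A e0 hp hv hpe0 he0
      have hg2 : A.X.G.s g = w ∨ A.X.G.t g = w := by simpa [hpv] using hg
      clear hg; rename' hg2 => hg
      have hadj : B.X.G.s (OHom.pe m g) = OHom.pp m v ∨
          B.X.G.t (OHom.pe m g) = OHom.pp m v := by
        rcases hg with hg | hg
        · exact Or.inl (by show B.X.G.s (m.f.h.pe g) = m.f.h.pp v; rw [m.f.h.hs, hg]; exact h.symm)
        · exact Or.inr (by show B.X.G.t (m.f.h.pe g) = m.f.h.pp v; rw [m.f.h.ht, hg]; exact h.symm)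
      obtain ⟨f', hf'1, hf'2⟩ := m.full v hv (OHom.pe m g) hadj
      refine ⟨⟨f', hf'2⟩, ?_, ?_⟩
      · exact mono_pe_inj m hm ((hex ⟨f', hf'2⟩).choose_spec.1.trans hf'1)
      · rcases hf'2 with h5 | h5
        · exact Or.inl (Subtype.ext (h5.trans hpv.symm))
        · exact Or.inr (Subtype.ext (h5.trans hpv.symm))
  obtain ⟨ι, hιpe, hιpp⟩ : ∃ ι : nbhd A v ⟶ A,
      (∀ e', OHom.pe ι e' = e'.val) ∧ (∀ p, OHom.pp ι p = p.val) := by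
    refine ⟨⟨⟨⟨Subtype.val, Subtype.val, fun _ => rfl, fun _ => rfl⟩,
      fun _ => rfl, fun _ => rfl⟩, ?_⟩, fun _ => rfl, fun _ => rfl⟩
    intro p hp g hg
    have hpv : p.val = v := by
      rcases p.2 with hpv | ⟨e0, he0, hpe0⟩
      · exact hpv
      · exact vertex_endpoint_unique A e0 hp hv hpe0 he0
    have hadj : A.X.G.s g = v ∨ A.X.G.t g = v := by
      rcases hg with hg | hg
      · exact Or.inl (hg.trans hpv)
      · exact Or.inr (hg.trans hpv)
    refine ⟨⟨g, hadj⟩, rfl, ?_⟩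
    rcases hg with hg | hg
    · exact Or.inl (Subtype.ext hg)
    · exact Or.inr (Subtype.ext hg)
  have hcomp : θ ≫ m = ι ≫ m := by
    apply ohom_ext
    · intro e'
      show OHom.pe m (OHom.pe θ e') = OHom.pe m (OHom.pe ι e')
      rw [hθpe, hιpe]
      exact (hex e').choose_spec.1
    · intro p
      show OHom.pp m (OHom.pp θ p) = OHom.pp m (OHom.pp ι p)
      rw [hθpp, hιpp]
      by_cases hpv : p.val = v
      · rw [if_pos hpv, hpv]; exact h.symm
      · rw [if_neg hpv]
  have heq := (cancel_mono m).mp hcomp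
  have hval := congrArg (fun (f : nbhd A v ⟶ A) => OHom.pp f ⟨v, Or.inl rfl⟩) heq
  erw [hθpp, hιpp, if_pos rfl] at hval
  exact hval.symm

theorem mono_pp_inj {A B : OGraph} (m : A ⟶ B) (hm : Mono m) :
    Function.Injective (OHom.pp m) := by
  intro p q h
  have hty : A.X.τ.pp p = A.X.τ.pp q := by
    rw [← m.f.comm_pp p, ← m.f.comm_pp q]; exact congrArg B.X.τ.pp h
  cases hP : A.X.τ.pp p with
  | V => exact mono_pp_inj_V m hm hP (hty ▸ hP) h
  | eps => exact mono_pp_inj_eps m hm hP (hty ▸ hP) h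
/-! ### The subtraction `M − G` -/

section Subtraction

variable {G M : OGraph} (m : G ⟶ M)

/-- Points of `M` not in the image of `m`. -/
def NP (p : M.X.G.P) : Prop := ¬ ∃ q, OHom.pp m q = p

/-- Edges of `M` not in the image of `m`. -/
def NE (e : M.X.G.E) : Prop := ¬ ∃ f, OHom.pe m f = e

theorem src_out {e : M.X.G.E} (he : NE m e) {q : G.X.G.P}
    (hq : OHom.pp m q = M.X.G.s e) : IsOutput G q := by
  have heps : G.X.τ.pp q = TyP.eps := by
    cases hP : G.X.τ.pp q with
    | V =>
      obtain ⟨f, hf1, _⟩ := m.full q hP e (Or.inl hq.symm)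
      exact absurd ⟨f, hf1⟩ he
    | eps => rfl
  refine ⟨heps, fun f hf => ?_⟩
  have h1 : M.X.G.s (OHom.pe m f) = OHom.pp m q := by rw [mhs, hf]
  have h2 : M.X.τ.pp (OHom.pp m q) = TyP.eps := by rw [mcpp]; exact heps
  exact he ⟨f, M.open_out (OHom.pp m q) h2 (OHom.pe m f) e h1 hq.symm⟩

theorem tgt_in {e : M.X.G.E} (he : NE m e) {q : G.X.G.P}
    (hq : OHom.pp m q = M.X.G.t e) : IsInput G q := by
  have heps : G.X.τ.pp q = TyP.eps := by
    cases hP : G.X.τ.pp q with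
    | V =>
      obtain ⟨f, hf1, _⟩ := m.full q hP e (Or.inr hq.symm)
      exact absurd ⟨f, hf1⟩ he
    | eps => rfl
  refine ⟨heps, fun f hf => ?_⟩
  have h1 : M.X.G.t (OHom.pe m f) = OHom.pp m q := by rw [mht, hf]
  have h2 : M.X.τ.pp (OHom.pp m q) = TyP.eps := by rw [mcpp]; exact heps
  exact he ⟨f, M.open_in (OHom.pp m q) h2 (OHom.pe m f) e h1 hq.symm⟩

/-- Points of the subtraction. -/
abbrev HPt := {p // NP m p} ⊕ ({p // IsInput G p} ⊕ {p // IsOutput G p})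

/-- Edges of the subtraction. -/
abbrev HEd := {e // NE m e}

open Classical in
/-- Source map of the subtraction. -/
noncomputable def Hsrc (e : HEd m) : HPt m :=
  if hs : ∃ q, OHom.pp m q = M.X.G.s e.val
  then Sum.inr (Sum.inr ⟨hs.choose, src_out m e.2 hs.choose_spec⟩)
  else Sum.inl ⟨M.X.G.s e.val, hs⟩

open Classical in
/-- Target map of the subtraction. -/
noncomputable def Htgt (e : HEd m) : HPt m :=
  if ht : ∃ q, OHom.pp m q = M.X.G.t e.val
  then Sum.inr (Sum.inl ⟨ht.choose, tgt_in m e.2 ht.choose_spec⟩)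
  else Sum.inl ⟨M.X.G.t e.val, ht⟩

theorem Hsrc_cases (e : HEd m) :
    (∃ (q : G.X.G.P) (hq : IsOutput G q), OHom.pp m q = M.X.G.s e.val ∧
        Hsrc m e = Sum.inr (Sum.inr ⟨q, hq⟩)) ∨
    (∃ hnp : NP m (M.X.G.s e.val), Hsrc m e = Sum.inl ⟨M.X.G.s e.val, hnp⟩) := by
  unfold Hsrc
  split
  · next h => exact Or.inl ⟨h.choose, src_out m e.2 h.choose_spec, h.choose_spec, rfl⟩
  · next h => exact Or.inr ⟨h, rfl⟩

theorem Htgt_cases (e : HEd m) :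
    (∃ (q : G.X.G.P) (hq : IsInput G q), OHom.pp m q = M.X.G.t e.val ∧
        Htgt m e = Sum.inr (Sum.inl ⟨q, hq⟩)) ∨
    (∃ hnp : NP m (M.X.G.t e.val), Htgt m e = Sum.inl ⟨M.X.G.t e.val, hnp⟩) := by
  unfold Htgt
  split
  · next h => exact Or.inl ⟨h.choose, tgt_in m e.2 h.choose_spec, h.choose_spec, rfl⟩
  · next h => exact Or.inr ⟨h, rfl⟩

theorem Hsrc_inl {e : HEd m} {x : {p // NP m p}} (h : Hsrc m e = Sum.inl x) :
    M.X.G.s e.val = x.val := by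
  rcases Hsrc_cases m e with ⟨q, hq, hpq, heq⟩ | ⟨hnp, heq⟩
  · rw [heq] at h; cases h
  · rw [heq] at h
    have := Sum.inl.inj h
    exact congrArg Subtype.val this

theorem Htgt_inl {e : HEd m} {x : {p // NP m p}} (h : Htgt m e = Sum.inl x) :
    M.X.G.t e.val = x.val := by
  rcases Htgt_cases m e with ⟨q, hq, hpq, heq⟩ | ⟨hnp, heq⟩
  · rw [heq] at h; cases h
  · rw [heq] at h
    exact congrArg Subtype.val (Sum.inl.inj h)

/-- The subtraction `M − G` as an open-graph. -/
noncomputable def Hsub : OGraph where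
  X := { G := { E := HEd m, P := HPt m, s := Hsrc m, t := Htgt m }
         τ := { pe := fun e => M.X.τ.pe e.val
                pp := fun p => Sum.elim (fun p => M.X.τ.pp p.val) (fun _ => TyP.eps) p
                hs := by
                  intro e
                  show twoG.s (M.X.τ.pe e.val) =
                    Sum.elim (fun p => M.X.τ.pp p.val) (fun _ => TyP.eps) (Hsrc m e)
                  rcases Hsrc_cases m e with ⟨q, hq, hpq, heq⟩ | ⟨hnp, heq⟩
                  · rw [heq]
                    show twoG.s (M.X.τ.pe e.val) = TyP.eps
                    rw [M.X.τ.hs e.val, ← hpq, mcpp]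
                    exact hq.1
                  · rw [heq]
                    exact M.X.τ.hs e.val
                ht := by
                  intro e
                  show twoG.t (M.X.τ.pe e.val) =
                    Sum.elim (fun p => M.X.τ.pp p.val) (fun _ => TyP.eps) (Htgt m e)
                  rcases Htgt_cases m e with ⟨q, hq, hpq, heq⟩ | ⟨hnp, heq⟩
                  · rw [heq]
                    show twoG.t (M.X.τ.pe e.val) = TyP.eps
                    rw [M.X.τ.ht e.val, ← hpq, mcpp]
                    exact hq.1
                  · rw [heq]
                    exact M.X.τ.ht e.val } }
  open_in := by
    rintro p hp e₁ e₂ h1 h2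
    change Htgt m e₁ = p at h1
    change Htgt m e₂ = p at h2
    apply Subtype.ext
    rcases p with ⟨p0, hnp⟩ | bq
    · exact M.open_in p0 hp e₁.val e₂.val (Htgt_inl m h1) (Htgt_inl m h2)
    · rcases bq with ⟨q, hq⟩ | ⟨q, hq⟩
      · have k : ∀ e : HEd m, Htgt m e = Sum.inr (Sum.inl ⟨q, hq⟩) →
            M.X.G.t e.val = OHom.pp m q := by
          intro e hE
          rcases Htgt_cases m e with ⟨q', hq', hpq', heq⟩ | ⟨hnp', heq⟩
          · rw [heq] at hE
            have hqq : q' = q := congrArg Subtype.val (Sum.inl.inj (Sum.inr.inj hE))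
            rw [← hpq', hqq]
          · rw [heq] at hE; cases hE
        have heps : M.X.τ.pp (OHom.pp m q) = TyP.eps := by
          rw [mcpp]; exact hq.1
        exact M.open_in _ heps e₁.val e₂.val (k e₁ h1) (k e₂ h2)
      · exfalso
        rcases Htgt_cases m e₁ with ⟨q', hq', hpq', heq⟩ | ⟨hnp', heq⟩ <;>
          rw [heq] at h1 <;> cases h1
  open_out := by
    rintro p hp e₁ e₂ h1 h2
    change Hsrc m e₁ = p at h1
    change Hsrc m e₂ = p at h2
    apply Subtype.ext
    rcases p with ⟨p0, hnp⟩ | bq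
    · exact M.open_out p0 hp e₁.val e₂.val (Hsrc_inl m h1) (Hsrc_inl m h2)
    · rcases bq with ⟨q, hq⟩ | ⟨q, hq⟩
      · exfalso
        rcases Hsrc_cases m e₁ with ⟨q', hq', hpq', heq⟩ | ⟨hnp', heq⟩ <;>
          rw [heq] at h1 <;> cases h1
      · have k : ∀ e : HEd m, Hsrc m e = Sum.inr (Sum.inr ⟨q, hq⟩) →
            M.X.G.s e.val = OHom.pp m q := by
          intro e hE
          rcases Hsrc_cases m e with ⟨q', hq', hpq', heq⟩ | ⟨hnp', heq⟩
          · rw [heq] at hE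
            have hqq : q' = q := congrArg Subtype.val (Sum.inr.inj (Sum.inr.inj hE))
            rw [← hpq', hqq]
          · rw [heq] at hE; cases hE
        have heps : M.X.τ.pp (OHom.pp m q) = TyP.eps := by
          rw [mcpp]; exact hq.1
        exact M.open_out _ heps e₁.val e₂.val (k e₁ h1) (k e₂ h2)

/-- The coboundary `c : B ⟶ M − G`. -/
noncomputable def csub : boundaryGraph G ⟶ Hsub m :=
  OHom.mk
    (TypedHom.mk (GraphHom.mk (fun e => e.elim) Sum.inr (fun e => e.elim) (fun e => e.elim))
      (fun _ => rfl) (fun e => e.elim))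
    (by rintro (⟨p, hp⟩ | ⟨p, hp⟩) hv <;> exact absurd hv (by simp [boundaryGraph]))

/-- The inclusion `h : M − G ⟶ M`. -/
noncomputable def hsub : Hsub m ⟶ M :=
  OHom.mk
    (TypedHom.mk
      (GraphHom.mk Subtype.val
        (fun p => Sum.elim Subtype.val (fun bq => OHom.pp m (Sum.elim Subtype.val Subtype.val bq)) p)
        (by
          intro e
          show M.X.G.s e.val =
            Sum.elim Subtype.val (fun bq => OHom.pp m (Sum.elim Subtype.val Subtype.val bq)) (Hsrc m e)
          rcases Hsrc_cases m e with ⟨q, hq, hpq, heq⟩ | ⟨hnp, heq⟩ <;> rw [heq]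
          · exact hpq.symm
          · rfl)
        (by
          intro e
          show M.X.G.t e.val =
            Sum.elim Subtype.val (fun bq => OHom.pp m (Sum.elim Subtype.val Subtype.val bq)) (Htgt m e)
          rcases Htgt_cases m e with ⟨q, hq, hpq, heq⟩ | ⟨hnp, heq⟩ <;> rw [heq]
          · exact hpq.symm
          · rfl))
      (by
        rintro (⟨p0, hnp⟩ | (⟨q, hq⟩ | ⟨q, hq⟩))
        · rfl
        · show M.X.τ.pp (OHom.pp m q) = TyP.eps
          rw [mcpp]; exact hq.1
        · show M.X.τ.pp (OHom.pp m q) = TyP.eps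
          rw [mcpp]; exact hq.1)
      (fun _ => rfl))
    (by
      rintro (⟨p0, hnp⟩ | (⟨q, hq⟩ | ⟨q, hq⟩)) hv e he
      · -- the only vertices are non-image points of M
        have hne : NE m e := by
          rintro ⟨f, rfl⟩
          rcases he with he | he
          · exact hnp ⟨G.X.G.s f, by rw [← mhs]; exact he⟩
          · exact hnp ⟨G.X.G.t f, by rw [← mht]; exact he⟩
        refine ⟨⟨e, hne⟩, rfl, ?_⟩
        rcases he with he | he
        · left
          show Hsrc m ⟨e, hne⟩ = Sum.inl ⟨p0, hnp⟩
          rcases Hsrc_cases m ⟨e, hne⟩ with ⟨q, hq, hpq, heq⟩ | ⟨hnp', heq⟩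
          · exact absurd ⟨q, hpq.trans he⟩ hnp
          · rw [heq]
            exact congrArg Sum.inl (Subtype.ext he)
        · right
          show Htgt m ⟨e, hne⟩ = Sum.inl ⟨p0, hnp⟩
          rcases Htgt_cases m ⟨e, hne⟩ with ⟨q, hq, hpq, heq⟩ | ⟨hnp', heq⟩
          · exact absurd ⟨q, hpq.trans he⟩ hnp
          · rw [heq]
            exact congrArg Sum.inl (Subtype.ext he)
      · exact absurd hv (by intro h; cases h)
      · exact absurd hv (by intro h; cases h))

theorem sqO : boundaryMap G ≫ m = csub m ≫ hsub m :=
  ohom_ext (fun e => e.elim)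
    (by rintro (⟨q, hq⟩ | ⟨q, hq⟩) <;> rfl)

end Subtraction
/-! ### The subtraction square is a pushout -/

section DescSec

variable {G M : OGraph} (m : G ⟶ M)

theorem sqT : S.map (boundaryMap G) ≫ S.map m = S.map (csub m) ≫ S.map (hsub m) :=
  congrArg S.map (sqO m)

section Inner

variable {X : TypedGraph} (u : G.X ⟶ X) (v : (Hsub m).X ⟶ X)

open Classical in
noncomputable def dPP (p : M.X.G.P) : X.G.P :=
  if h : ∃ q, OHom.pp m q = p then u.h.pp h.choose else v.h.pp (Sum.inl ⟨p, h⟩)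

open Classical in
noncomputable def dPE (e : M.X.G.E) : X.G.E :=
  if h : ∃ f, OHom.pe m f = e then u.h.pe h.choose else v.h.pe ⟨e, h⟩

theorem dPP_im (injpp : Function.Injective (OHom.pp m)) (q : G.X.G.P) : dPP m u v (OHom.pp m q) = u.h.pp q := by
  unfold dPP
  rw [dif_pos ⟨q, rfl⟩]
  exact congrArg u.h.pp (injpp (⟨q, rfl⟩ : ∃ q', OHom.pp m q' = OHom.pp m q).choose_spec)

theorem dPP_nim {p : M.X.G.P} (h : NP m p) : dPP m u v p = v.h.pp (Sum.inl ⟨p, h⟩) := by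
  unfold dPP
  rw [dif_neg h]

theorem dPE_im (injpe : Function.Injective (OHom.pe m)) (f : G.X.G.E) : dPE m u v (OHom.pe m f) = u.h.pe f := by
  unfold dPE
  rw [dif_pos ⟨f, rfl⟩]
  exact congrArg u.h.pe (injpe (⟨f, rfl⟩ : ∃ f', OHom.pe m f' = OHom.pe m f).choose_spec)

theorem dPE_nim {e : M.X.G.E} (h : NE m e) : dPE m u v e = v.h.pe ⟨e, h⟩ := by
  unfold dPE
  rw [dif_neg h]

variable (hco : ∀ q : ({p // IsInput G p} ⊕ {p // IsOutput G p}),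
    u.h.pp (Sum.elim Subtype.val Subtype.val q) = v.h.pp (Sum.inr q))

/-- The mediating typed-graph morphism out of `M`. -/
noncomputable def descT (hco : ∀ q : ({p // IsInput G p} ⊕ {p // IsOutput G p}),
      u.h.pp (Sum.elim Subtype.val Subtype.val q) = v.h.pp (Sum.inr q)) (injpp : Function.Injective (OHom.pp m))
    (injpe : Function.Injective (OHom.pe m)) : M.X ⟶ X := by
  refine ⟨⟨dPE m u v, dPP m u v, ?_, ?_⟩, ?_, ?_⟩
  · -- hs
    intro e
    show X.G.s (dPE m u v e) = dPP m u v (M.X.G.s e)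
    by_cases he : ∃ f, OHom.pe m f = e
    · obtain ⟨f, rfl⟩ := he
      rw [dPE_im m u v injpe, u.h.hs, mhs, dPP_im m u v injpp]
    · rw [dPE_nim m u v he]; refine (v.h.hs (⟨e, he⟩ : HEd m)).trans ?_
      show v.h.pp (Hsrc m ⟨e, he⟩) = _
      rcases Hsrc_cases m ⟨e, he⟩ with ⟨q, hq, hpq, heq⟩ | ⟨hnp, heq⟩
      · rw [heq, ← hpq, dPP_im m u v injpp]
        exact (hco (Sum.inr ⟨q, hq⟩)).symm
      · rw [heq, dPP_nim m u v hnp]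
  · -- ht
    intro e
    show X.G.t (dPE m u v e) = dPP m u v (M.X.G.t e)
    by_cases he : ∃ f, OHom.pe m f = e
    · obtain ⟨f, rfl⟩ := he
      rw [dPE_im m u v injpe, u.h.ht, mht, dPP_im m u v injpp]
    · rw [dPE_nim m u v he]; refine (v.h.ht (⟨e, he⟩ : HEd m)).trans ?_
      show v.h.pp (Htgt m ⟨e, he⟩) = _
      rcases Htgt_cases m ⟨e, he⟩ with ⟨q, hq, hpq, heq⟩ | ⟨hnp, heq⟩
      · rw [heq, ← hpq, dPP_im m u v injpp]
        exact (hco (Sum.inl ⟨q, hq⟩)).symm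
      · rw [heq, dPP_nim m u v hnp]
  · -- comm_pp
    intro p
    show X.τ.pp (dPP m u v p) = M.X.τ.pp p
    by_cases hp : ∃ q, OHom.pp m q = p
    · obtain ⟨q, rfl⟩ := hp
      rw [dPP_im m u v injpp, u.comm_pp, mcpp]
    · rw [dPP_nim m u v hp]
      exact v.comm_pp (Sum.inl ⟨p, hp⟩)
  · -- comm_pe
    intro e
    show X.τ.pe (dPE m u v e) = M.X.τ.pe e
    by_cases he : ∃ f, OHom.pe m f = e
    · obtain ⟨f, rfl⟩ := he
      rw [dPE_im m u v injpe, u.comm_pe, mcpe]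
    · rw [dPE_nim m u v he]
      exact v.comm_pe ⟨e, he⟩

theorem descT_fac_left (injpp : Function.Injective (OHom.pp m))
    (injpe : Function.Injective (OHom.pe m)) : S.map m ≫ descT m u v hco injpp injpe = u :=
  thom_ext (fun f => dPE_im m u v injpe f) (fun q => dPP_im m u v injpp q)

theorem descT_fac_right (injpp : Function.Injective (OHom.pp m))
    (injpe : Function.Injective (OHom.pe m)) : S.map (hsub m) ≫ descT m u v hco injpp injpe = v := by
  apply thom_ext
  · intro e
    exact dPE_nim m u v e.2
  · rintro (⟨p0, hnp⟩ | (⟨q, hq⟩ | ⟨q, hq⟩))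
    · exact dPP_nim m u v hnp
    · exact (dPP_im m u v injpp q).trans (hco (Sum.inl ⟨q, hq⟩))
    · exact (dPP_im m u v injpp q).trans (hco (Sum.inr ⟨q, hq⟩))

theorem descT_uniq (injpp : Function.Injective (OHom.pp m))
    (injpe : Function.Injective (OHom.pe m)) (w' : M.X ⟶ X) (h1 : S.map m ≫ w' = u)
    (h2 : S.map (hsub m) ≫ w' = v) : w' = descT m u v hco injpp injpe := by
  apply thom_ext
  · intro e
    show w'.h.pe e = dPE m u v e
    by_cases he : ∃ f, OHom.pe m f = e
    · obtain ⟨f, rfl⟩ := he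
      have h3 : w'.h.pe (OHom.pe m f) = u.h.pe f :=
        congrArg (fun t : G.X ⟶ X => t.h.pe f) h1
      rw [h3, dPE_im m u v injpe]
    · have h3 : w'.h.pe e = v.h.pe ⟨e, he⟩ :=
        congrArg (fun t : (Hsub m).X ⟶ X => t.h.pe (⟨e, he⟩ : HEd m)) h2
      rw [h3, dPE_nim m u v he]
  · intro p
    show w'.h.pp p = dPP m u v p
    by_cases hp : ∃ q, OHom.pp m q = p
    · obtain ⟨q, rfl⟩ := hp
      have h3 : w'.h.pp (OHom.pp m q) = u.h.pp q :=
        congrArg (fun t : G.X ⟶ X => t.h.pp q) h1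
      rw [h3, dPP_im m u v injpp]
    · have h3 : w'.h.pp p = v.h.pp (Sum.inl ⟨p, hp⟩) :=
        congrArg (fun t : (Hsub m).X ⟶ X => t.h.pp (Sum.inl ⟨p, hp⟩)) h2
      rw [h3, dPP_nim m u v hp]

end Inner

variable (injpp : Function.Injective (OHom.pp m)) (injpe : Function.Injective (OHom.pe m))

/-- The subtraction square is a pushout in `Graph/2_G`. -/
noncomputable def colimT (injpp : Function.Injective (OHom.pp m))
    (injpe : Function.Injective (OHom.pe m)) :
    IsColimit (PushoutCocone.mk (S.map m) (S.map (hsub m)) (sqT m)) :=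
  PushoutCocone.IsColimit.mk _
    (fun s => descT m s.inl s.inr
      (fun q => congrArg (fun t : (boundaryGraph G).X ⟶ s.pt => t.h.pp q) s.condition) injpp injpe)
    (fun s => descT_fac_left m s.inl s.inr _ injpp injpe)
    (fun s => descT_fac_right m s.inl s.inr _ injpp injpe)
    (fun s w' h1 h2 => descT_uniq m s.inl s.inr _ injpp injpe w' h1 h2)

theorem hpoT (injpp : Function.Injective (OHom.pp m))
    (injpe : Function.Injective (OHom.pe m)) : IsPushout (S.map (boundaryMap G)) (S.map (csub m)) (S.map m) (S.map (hsub m)) :=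
  IsPushout.of_isColimit' ⟨sqT m⟩ (colimT m injpp injpe)

theorem descT_full {Y : OGraph} (u' : G ⟶ Y) (v' : Hsub m ⟶ Y)
    (hco : ∀ q : ({p // IsInput G p} ⊕ {p // IsOutput G p}),
      u'.f.h.pp (Sum.elim Subtype.val Subtype.val q) = v'.f.h.pp (Sum.inr q)) :
    FullOnVertices (descT m u'.f v'.f hco injpp injpe) := by
  intro p hp e he
  by_cases hpim : ∃ q, OHom.pp m q = p
  · obtain ⟨q, rfl⟩ := hpim
    have hq : G.X.τ.pp q = TyP.V := by rw [← mcpp m q]; exact hp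
    have hd : (descT m u'.f v'.f hco injpp injpe).h.pp (OHom.pp m q) = u'.f.h.pp q :=
      dPP_im m u'.f v'.f injpp q
    rw [hd] at he
    obtain ⟨f, hf1, hf2⟩ := u'.full q hq e he
    refine ⟨OHom.pe m f, ?_, ?_⟩
    · have hd2 : (descT m u'.f v'.f hco injpp injpe).h.pe (OHom.pe m f) = u'.f.h.pe f :=
        dPE_im m u'.f v'.f injpe f
      rw [hd2]; exact hf1
    · rcases hf2 with h5 | h5
      · exact Or.inl (by rw [mhs, h5])
      · exact Or.inr (by rw [mht, h5])
  · have hd : (descT m u'.f v'.f hco injpp injpe).h.pp p = v'.f.h.pp (Sum.inl ⟨p, hpim⟩) :=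
      dPP_nim m u'.f v'.f hpim
    rw [hd] at he
    have hv : (Hsub m).X.τ.pp (Sum.inl ⟨p, hpim⟩) = TyP.V := hp
    obtain ⟨e', he'1, he'2⟩ := v'.full (Sum.inl ⟨p, hpim⟩) hv e he
    refine ⟨e'.val, ?_, ?_⟩
    · have hd2 : (descT m u'.f v'.f hco injpp injpe).h.pe e'.val = v'.f.h.pe ⟨e'.val, e'.2⟩ :=
        dPE_nim m u'.f v'.f e'.2
      rw [hd2]; exact he'1
    · rcases he'2 with h5 | h5
      · exact Or.inl (Hsrc_inl m h5)
      · exact Or.inr (Htgt_inl m h5)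

/-- The subtraction square is a pushout in `OGraph`. -/
noncomputable def colimO (injpp : Function.Injective (OHom.pp m))
    (injpe : Function.Injective (OHom.pe m)) : IsColimit (PushoutCocone.mk m (hsub m) (sqO m)) :=
  PushoutCocone.IsColimit.mk _
    (fun s => OHom.mk
      (descT m s.inl.f s.inr.f
        (fun q => congrArg (fun t : boundaryGraph G ⟶ s.pt => OHom.pp t q) s.condition) injpp injpe)
      (descT_full m injpp injpe s.inl s.inr _))
    (fun s => by
      apply ohom_ext
      · exact fun f => dPE_im m s.inl.f s.inr.f injpe f
      · exact fun q => dPP_im m s.inl.f s.inr.f injpp q)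
    (fun s => by
      apply ohom_ext
      · exact fun e => dPE_nim m s.inl.f s.inr.f e.2
      · rintro (⟨p0, hnp⟩ | (⟨q, hq⟩ | ⟨q, hq⟩))
        · exact dPP_nim m s.inl.f s.inr.f hnp
        · exact (dPP_im m s.inl.f s.inr.f injpp q).trans
            (congrArg (fun t : boundaryGraph G ⟶ s.pt => OHom.pp t (Sum.inl ⟨q, hq⟩)) s.condition)
        · exact (dPP_im m s.inl.f s.inr.f injpp q).trans
            (congrArg (fun t : boundaryGraph G ⟶ s.pt => OHom.pp t (Sum.inr ⟨q, hq⟩)) s.condition))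
    (fun s w' h1 h2 => by
      have := descT_uniq m s.inl.f s.inr.f
        (fun q => congrArg (fun t : boundaryGraph G ⟶ s.pt => OHom.pp t q) s.condition)
        injpp injpe w'.f (congrArg OHom.f h1) (congrArg OHom.f h2)
      exact ohom_ext (fun e => congrArg (fun t : TypedHom M.X s.pt.X => t.h.pe e) this)
        (fun p => congrArg (fun t : TypedHom M.X s.pt.X => t.h.pp p) this))

theorem hpoO (injpp : Function.Injective (OHom.pp m))
    (injpe : Function.Injective (OHom.pe m)) : IsPushout (boundaryMap G) (csub m) m (hsub m) :=
  IsPushout.of_isColimit' ⟨sqO m⟩ (colimO m injpp injpe)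

end DescSec
/-! ### The concrete pushout `Q` of `G ← B → H'` and uniqueness of complements -/

section Qsec

variable {G : OGraph} {H' : OGraph} (c' : boundaryGraph G ⟶ H')

open Classical in
noncomputable def rho (p : G.X.G.P) :
    H'.X.G.P ⊕ {p : G.X.G.P // ¬(IsInput G p ∨ IsOutput G p)} :=
  if h : IsInput G p then Sum.inl (OHom.pp c' (Sum.inl ⟨p, h⟩))
  else if h2 : IsOutput G p then Sum.inl (OHom.pp c' (Sum.inr ⟨p, h2⟩))
  else Sum.inr ⟨p, fun hc => hc.elim h h2⟩

theorem rho_tau (p : G.X.G.P) :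
    Sum.elim H'.X.τ.pp (fun r => G.X.τ.pp r.val) (rho c' p) = G.X.τ.pp p := by
  unfold rho
  split
  · next h => exact (mcpp c' (Sum.inl ⟨p, h⟩)).trans h.1.symm
  · split
    · next h2 => exact (mcpp c' (Sum.inr ⟨p, h2⟩)).trans h2.1.symm
    · rfl

theorem rho_nb {p : G.X.G.P} (h1 : ¬ IsInput G p) (h2 : ¬ IsOutput G p) :
    rho c' p = Sum.inr ⟨p, fun hc => hc.elim h1 h2⟩ := by
  unfold rho
  rw [dif_neg h1, dif_neg h2]

/-- The concrete pushout of `G ← B → H'` as a typed graph. -/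
noncomputable def Qg : TypedGraph where
  G := { E := G.X.G.E ⊕ H'.X.G.E
         P := H'.X.G.P ⊕ {p : G.X.G.P // ¬(IsInput G p ∨ IsOutput G p)}
         s := Sum.elim (fun f => rho c' (G.X.G.s f)) (fun y => Sum.inl (H'.X.G.s y))
         t := Sum.elim (fun f => rho c' (G.X.G.t f)) (fun y => Sum.inl (H'.X.G.t y)) }
  τ := { pe := Sum.elim G.X.τ.pe H'.X.τ.pe
         pp := Sum.elim H'.X.τ.pp (fun r => G.X.τ.pp r.val)
         hs := by
           rintro (f | y)
           · show twoG.s (G.X.τ.pe f) = Sum.elim _ _ (rho c' (G.X.G.s f))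
             rw [rho_tau]
             exact G.X.τ.hs f
           · exact H'.X.τ.hs y
         ht := by
           rintro (f | y)
           · show twoG.t (G.X.τ.pe f) = Sum.elim _ _ (rho c' (G.X.G.t f))
             rw [rho_tau]
             exact G.X.τ.ht f
           · exact H'.X.τ.ht y }

noncomputable def iotaG : G.X ⟶ Qg c' :=
  ⟨⟨Sum.inl, rho c', fun _ => rfl, fun _ => rfl⟩, rho_tau c', fun _ => rfl⟩

noncomputable def iotaH : H'.X ⟶ Qg c' :=
  ⟨⟨Sum.inr, Sum.inl, fun _ => rfl, fun _ => rfl⟩, fun _ => rfl, fun _ => rfl⟩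

theorem rho_b (hiso : ∀ p, ¬ IsIsolated G p) (q : (boundaryGraph G).X.G.P) :
    rho c' (Sum.elim Subtype.val Subtype.val q) = Sum.inl (OHom.pp c' q) := by
  rcases q with ⟨p, h⟩ | ⟨p, h⟩
  · show rho c' p = _
    unfold rho
    rw [dif_pos h]
  · show rho c' p = _
    unfold rho
    rw [dif_neg (fun hin => hiso p ⟨hin, h⟩), dif_pos h]

theorem sqQ (hiso : ∀ p, ¬ IsIsolated G p) :
    S.map (boundaryMap G) ≫ iotaG c' = S.map c' ≫ iotaH c' :=
  thom_ext (fun e => e.elim) (fun q => rho_b c' hiso q)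

section QDesc

variable {W : TypedGraph} (u : G.X ⟶ W) (v : H'.X ⟶ W)

theorem qd_rho
    (hco : ∀ q, u.h.pp (Sum.elim Subtype.val Subtype.val q) = v.h.pp (OHom.pp c' q))
    (p : G.X.G.P) :
    Sum.elim v.h.pp (fun r => u.h.pp r.val) (rho c' p) = u.h.pp p := by
  unfold rho
  split
  · next h => exact (hco (Sum.inl ⟨p, h⟩)).symm
  · split
    · next h2 => exact (hco (Sum.inr ⟨p, h2⟩)).symm
    · rfl

noncomputable def qdesc
    (hco : ∀ q, u.h.pp (Sum.elim Subtype.val Subtype.val q) = v.h.pp (OHom.pp c' q)) :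
    Qg c' ⟶ W := by
  refine ⟨⟨Sum.elim u.h.pe v.h.pe, Sum.elim v.h.pp (fun r => u.h.pp r.val), ?_, ?_⟩, ?_, ?_⟩
  · rintro (f | y)
    · show W.G.s (u.h.pe f) = Sum.elim _ _ (rho c' (G.X.G.s f))
      rw [qd_rho c' u v hco]
      exact u.h.hs f
    · exact v.h.hs y
  · rintro (f | y)
    · show W.G.t (u.h.pe f) = Sum.elim _ _ (rho c' (G.X.G.t f))
      rw [qd_rho c' u v hco]
      exact u.h.ht f
    · exact v.h.ht y
  · rintro (y | r)
    · exact v.comm_pp y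
    · exact u.comm_pp r.val
  · rintro (f | y)
    · exact u.comm_pe f
    · exact v.comm_pe y

variable (hco : ∀ q, u.h.pp (Sum.elim Subtype.val Subtype.val q) = v.h.pp (OHom.pp c' q))

theorem qdesc_fac_left : iotaG c' ≫ qdesc c' u v hco = u :=
  thom_ext (fun _ => rfl) (fun p => qd_rho c' u v hco p)

theorem qdesc_fac_right : iotaH c' ≫ qdesc c' u v hco = v :=
  thom_ext (fun _ => rfl) (fun _ => rfl)

theorem qdesc_uniq (w' : Qg c' ⟶ W) (h1 : iotaG c' ≫ w' = u) (h2 : iotaH c' ≫ w' = v) :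
    w' = qdesc c' u v hco := by
  apply thom_ext
  · rintro (f | y)
    · exact congrArg (fun t : G.X ⟶ W => t.h.pe f) h1
    · exact congrArg (fun t : H'.X ⟶ W => t.h.pe y) h2
  · rintro (y | ⟨p, hnb⟩)
    · exact congrArg (fun t : H'.X ⟶ W => t.h.pp y) h2
    · have hr : rho c' p = Sum.inr ⟨p, hnb⟩ :=
        rho_nb c' (fun h => hnb (Or.inl h)) (fun h => hnb (Or.inr h))
      have := congrArg (fun t : G.X ⟶ W => t.h.pp p) h1
      show w'.h.pp (Sum.inr ⟨p, hnb⟩) = u.h.pp p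
      rw [← hr]
      exact this
  
end QDesc

noncomputable def colimQ (hiso : ∀ p, ¬ IsIsolated G p) :
    IsColimit (PushoutCocone.mk (iotaG c') (iotaH c') (sqQ c' hiso)) :=
  PushoutCocone.IsColimit.mk _
    (fun s => qdesc c' s.inl s.inr
      (fun q => congrArg (fun t : (boundaryGraph G).X ⟶ s.pt => t.h.pp q) s.condition))
    (fun s => qdesc_fac_left c' s.inl s.inr _)
    (fun s => qdesc_fac_right c' s.inl s.inr _)
    (fun s w' h1 h2 => qdesc_uniq c' s.inl s.inr _ w' h1 h2)

end Qsec
/-! ### Uniqueness of the pushout complement -/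

theorem complement_unique {G M : OGraph} (m : G ⟶ M) (hm : Mono m)
    (hiso : ∀ p, ¬ IsIsolated G p)
    (H' : OGraph) (c' : boundaryGraph G ⟶ H') (h' : H' ⟶ M)
    (hp'S : IsPushout (S.map (boundaryMap G)) (S.map c') (S.map m) (S.map h')) :
    ∃ φ : Hsub m ≅ H', csub m ≫ φ.hom = c' ∧ φ.hom ≫ h' = hsub m := by
  classical
  have injpp := mono_pp_inj m hm
  have injpe := mono_pe_inj m hm
  set α : Qg c' ⟶ M.X :=
    PushoutCocone.IsColimit.desc (colimQ c' hiso) (S.map m) (S.map h') hp'S.w with hα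
  have hαG : iotaG c' ≫ α = S.map m :=
    PushoutCocone.IsColimit.inl_desc (colimQ c' hiso) (S.map m) (S.map h') hp'S.w
  have hαH : iotaH c' ≫ α = S.map h' :=
    PushoutCocone.IsColimit.inr_desc (colimQ c' hiso) (S.map m) (S.map h') hp'S.w
  set β : M.X ⟶ Qg c' := hp'S.desc (iotaG c') (iotaH c') (sqQ c' hiso) with hβ
  have hβm : S.map m ≫ β = iotaG c' := hp'S.inl_desc _ _ _
  have hβh : S.map h' ≫ β = iotaH c' := hp'S.inr_desc _ _ _
  have hαβ : α ≫ β = 𝟙 (Qg c') := by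
    apply PushoutCocone.IsColimit.hom_ext (colimQ c' hiso)
    · show iotaG c' ≫ (α ≫ β) = iotaG c' ≫ 𝟙 _
      rw [← Category.assoc, hαG]; erw [hβm]
      exact (Category.comp_id _).symm
    · show iotaH c' ≫ (α ≫ β) = iotaH c' ≫ 𝟙 _
      rw [← Category.assoc, hαH]; erw [hβh]
      exact (Category.comp_id _).symm
  have hβα : β ≫ α = 𝟙 M.X := by
    apply hp'S.hom_ext
    · erw [← Category.assoc, hβm, hαG]
      exact (Category.comp_id _).symm
    · erw [← Category.assoc, hβh, hαH]
  -- pointwise versions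
  have hαβP : ∀ z, β.h.pp (α.h.pp z) = z := by
    intro z
    have h2 := congrArg (fun t : Qg c' ⟶ Qg c' => t.h.pp z) hαβ
    exact h2
  have hαβE : ∀ z, β.h.pe (α.h.pe z) = z := by
    intro z
    have h2 := congrArg (fun t : Qg c' ⟶ Qg c' => t.h.pe z) hαβ
    exact h2
  have hβαP : ∀ p, α.h.pp (β.h.pp p) = p := by
    intro p
    have h2 := congrArg (fun t : M.X ⟶ M.X => t.h.pp p) hβα
    exact h2
  have hβαE : ∀ e, α.h.pe (β.h.pe e) = e := by
    intro e
    have h2 := congrArg (fun t : M.X ⟶ M.X => t.h.pe e) hβα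
    exact h2
  have hαGP : ∀ p, α.h.pp (rho c' p) = OHom.pp m p := by
    intro p
    have h2 := congrArg (fun t : G.X ⟶ M.X => t.h.pp p) hαG
    exact h2
  have hαGE : ∀ f, α.h.pe (Sum.inl f) = OHom.pe m f := by
    intro f
    have h2 := congrArg (fun t : G.X ⟶ M.X => t.h.pe f) hαG
    exact h2
  have hαHP : ∀ y, α.h.pp (Sum.inl y) = OHom.pp h' y := by
    intro y
    have h2 := congrArg (fun t : H'.X ⟶ M.X => t.h.pp y) hαH
    exact h2
  have hαHE : ∀ y, α.h.pe (Sum.inr y) = OHom.pe h' y := by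
    intro y
    have h2 := congrArg (fun t : H'.X ⟶ M.X => t.h.pe y) hαH
    exact h2
  have hαPinj : Function.Injective α.h.pp := by
    intro a b hab
    have := congrArg β.h.pp hab
    rwa [hαβP, hαβP] at this
  have hαEinj : Function.Injective α.h.pe := by
    intro a b hab
    have := congrArg β.h.pe hab
    rwa [hαβE, hαβE] at this
  have hh'Pinj : ∀ y1 y2, OHom.pp h' y1 = OHom.pp h' y2 → y1 = y2 := by
    intro y1 y2 h12
    exact Sum.inl.inj (hαPinj (by rw [hαHP, hαHP, h12]))
  have hh'Einj : ∀ y1 y2, OHom.pe h' y1 = OHom.pe h' y2 → y1 = y2 := by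
    intro y1 y2 h12
    exact Sum.inr.inj (hαEinj (by rw [hαHE, hαHE, h12]))
  have hw : ∀ q, OHom.pp m (Sum.elim Subtype.val Subtype.val q) = OHom.pp h' (OHom.pp c' q) := by
    intro q
    have h2 := congrArg (fun t : (boundaryGraph G).X ⟶ M.X => t.h.pp q) hp'S.w
    exact h2
  have hcinj : ∀ q1 q2, OHom.pp c' q1 = OHom.pp c' q2 → q1 = q2 := by
    intro q1 q2 hq
    have hb : Sum.elim Subtype.val Subtype.val q1 = Sum.elim Subtype.val Subtype.val q2 := by
      apply injpp
      show OHom.pp m _ = OHom.pp m _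
      rw [← hαGP, ← hαGP, rho_b c' hiso q1, rho_b c' hiso q2, hq]
    rcases q1 with ⟨p1, h1⟩ | ⟨p1, h1⟩ <;> rcases q2 with ⟨p2, h2⟩ | ⟨p2, h2⟩ <;>
      simp only [Sum.elim_inl, Sum.elim_inr] at hb
    · exact congrArg Sum.inl (Subtype.ext hb)
    · exact absurd ⟨hb ▸ h1, h2⟩ (hiso p2)
    · exact absurd ⟨h2, hb ▸ h1⟩ (hiso p2)
    · exact congrArg Sum.inr (Subtype.ext hb)
  have hNEh : ∀ y, NE m (OHom.pe h' y) := by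
    rintro y ⟨f, hf⟩
    have : (Sum.inl f : G.X.G.E ⊕ H'.X.G.E) = Sum.inr y := by
      apply hαEinj
      rw [hαGE, hαHE, hf]
    cases this
  have hNPh : ∀ y, (¬ ∃ q, OHom.pp c' q = y) → NP m (OHom.pp h' y) := by
    rintro y hy ⟨g, hg⟩
    have hr : rho c' g = Sum.inl y := hαPinj (by rw [hαGP, hαHP, hg])
    unfold rho at hr
    split at hr
    · next h => exact hy ⟨Sum.inl ⟨g, h⟩, Sum.inl.inj hr⟩
    · split at hr
      · next h2 => exact hy ⟨Sum.inr ⟨g, h2⟩, Sum.inl.inj hr⟩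
      · cases hr
  have hbeta_inl : ∀ (p0 : M.X.G.P), NP m p0 → ∃ y, β.h.pp p0 = Sum.inl y := by
    intro p0 hnp
    cases hb : β.h.pp p0 with
    | inl y => exact ⟨y, rfl⟩
    | inr r =>
      exfalso
      have hr : rho c' r.val = Sum.inr r := by
        have := rho_nb c' (fun h => r.2 (Or.inl h)) (fun h => r.2 (Or.inr h))
        exact this
      exact hnp ⟨r.val, by rw [← hαGP, hr, ← hb, hβαP]⟩
  have hbeta_inr : ∀ (e : M.X.G.E), NE m e → ∃ y, β.h.pe e = Sum.inr y := by
    intro e hne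
    cases hb : β.h.pe e with
    | inr y => exact ⟨y, rfl⟩
    | inl f => exact absurd ⟨f, by rw [← hαGE, ← hb, hβαE]⟩ hne
  -- the data of φ
  set φP : HPt m → H'.X.G.P := fun x =>
    match x with
    | Sum.inl r => (hbeta_inl r.val r.2).choose
    | Sum.inr q => OHom.pp c' q
    with hφPdef
  set φE : HEd m → H'.X.G.E := fun e => (hbeta_inr e.val e.2).choose with hφEdef
  have hφE : ∀ e : HEd m, OHom.pe h' (φE e) = e.val := by
    intro e
    have hspec := (hbeta_inr e.val e.2).choose_spec
    rw [← hαHE]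
    show α.h.pe (Sum.inr (hbeta_inr e.val e.2).choose) = e.val
    rw [← hspec, hβαE]
  have hφP1 : ∀ (p0 : M.X.G.P) (hnp : NP m p0),
      OHom.pp h' (φP (Sum.inl ⟨p0, hnp⟩)) = p0 := by
    intro p0 hnp
    have hspec := (hbeta_inl p0 hnp).choose_spec
    rw [← hαHP]
    show α.h.pp (Sum.inl (hbeta_inl p0 hnp).choose) = p0
    rw [← hspec, hβαP]
  obtain ⟨φ, hφpe, hφpp⟩ : ∃ φ : Hsub m ⟶ H',
      (∀ e, OHom.pe φ e = φE e) ∧ (∀ x, OHom.pp φ x = φP x) := by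
    refine ⟨⟨⟨⟨φE, φP, ?_, ?_⟩, ?_, ?_⟩, ?_⟩, fun _ => rfl, fun _ => rfl⟩
    · -- hs
      intro e
      show H'.X.G.s (φE e) = φP (Hsrc m e)
      have hkey : OHom.pp h' (H'.X.G.s (φE e)) = M.X.G.s e.val := by
        rw [← mhs h' (φE e)]
        exact congrArg M.X.G.s (hφE e)
      rcases Hsrc_cases m e with ⟨q, hq, hpq, heq⟩ | ⟨hnp, heq⟩
      · rw [heq]
        show H'.X.G.s (φE e) = OHom.pp c' (Sum.inr ⟨q, hq⟩)
        apply hh'Pinj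
        rw [hkey, ← hpq]
        exact hw (Sum.inr ⟨q, hq⟩)
      · rw [heq]
        apply hh'Pinj
        rw [hkey]
        exact (hφP1 _ hnp).symm
    · -- ht
      intro e
      show H'.X.G.t (φE e) = φP (Htgt m e)
      have hkey : OHom.pp h' (H'.X.G.t (φE e)) = M.X.G.t e.val := by
        rw [← mht h' (φE e)]
        exact congrArg M.X.G.t (hφE e)
      rcases Htgt_cases m e with ⟨q, hq, hpq, heq⟩ | ⟨hnp, heq⟩
      · rw [heq]
        show H'.X.G.t (φE e) = OHom.pp c' (Sum.inl ⟨q, hq⟩)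
        apply hh'Pinj
        rw [hkey, ← hpq]
        exact hw (Sum.inl ⟨q, hq⟩)
      · rw [heq]
        apply hh'Pinj
        rw [hkey]
        exact (hφP1 _ hnp).symm
    · -- comm_pp
      rintro (⟨p0, hnp⟩ | bq)
      · show H'.X.τ.pp (φP (Sum.inl ⟨p0, hnp⟩)) = M.X.τ.pp p0
        rw [← mcpp h', hφP1 _ hnp]
      · show H'.X.τ.pp (OHom.pp c' bq) = TyP.eps
        exact mcpp c' bq
    · -- comm_pe
      intro e
      show H'.X.τ.pe (φE e) = M.X.τ.pe e.val
      rw [← mcpe h' (φE e)]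
      exact congrArg M.X.τ.pe (hφE e)
    · -- fullness
      rintro (⟨p0, hnp⟩ | bq) hv e he
      · refine ⟨⟨OHom.pe h' e, hNEh e⟩, ?_, ?_⟩
        · apply hh'Einj
          rw [hφE]
        · rcases he with he | he
          · left
            show Hsrc m ⟨OHom.pe h' e, hNEh e⟩ = Sum.inl ⟨p0, hnp⟩
            have hsv : M.X.G.s (OHom.pe h' e) = p0 := by
              rw [mhs h', he, hφP1 _ hnp]
            rcases Hsrc_cases m ⟨OHom.pe h' e, hNEh e⟩ with ⟨q, hq, hpq, heq⟩ | ⟨hnp', heq⟩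
            · exact absurd ⟨q, hpq.trans hsv⟩ hnp
            · rw [heq]
              exact congrArg Sum.inl (Subtype.ext hsv)
          · right
            show Htgt m ⟨OHom.pe h' e, hNEh e⟩ = Sum.inl ⟨p0, hnp⟩
            have hsv : M.X.G.t (OHom.pe h' e) = p0 := by
              rw [mht h', he, hφP1 _ hnp]
            rcases Htgt_cases m ⟨OHom.pe h' e, hNEh e⟩ with ⟨q, hq, hpq, heq⟩ | ⟨hnp', heq⟩
            · exact absurd ⟨q, hpq.trans hsv⟩ hnp
            · rw [heq]
              exact congrArg Sum.inl (Subtype.ext hsv)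
      · exact absurd hv (by intro h; cases h)
  -- the data of ψ
  set ψE : H'.X.G.E → HEd m := fun y => ⟨OHom.pe h' y, hNEh y⟩ with hψEdef
  set ψP : H'.X.G.P → HPt m := fun y =>
    if hy : ∃ q, OHom.pp c' q = y then Sum.inr hy.choose
    else Sum.inl ⟨OHom.pp h' y, hNPh y hy⟩
    with hψPdef
  have hψP1 : ∀ y q, OHom.pp c' q = y → ψP y = Sum.inr q := by
    intro y q hq
    have hex : ∃ q', OHom.pp c' q' = y := ⟨q, hq⟩
    show (if hy : ∃ q, OHom.pp c' q = y then Sum.inr hy.choose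
      else Sum.inl (⟨OHom.pp h' y, hNPh y hy⟩ : {p // NP m p})) = Sum.inr q
    rw [dif_pos hex]
    exact congrArg Sum.inr (hcinj _ _ (hex.choose_spec.trans hq.symm))
  have hψP2 : ∀ y (hy : ¬ ∃ q, OHom.pp c' q = y),
      ψP y = Sum.inl ⟨OHom.pp h' y, hNPh y hy⟩ := by
    intro y hy
    show (if hy : ∃ q, OHom.pp c' q = y then Sum.inr hy.choose
      else Sum.inl (⟨OHom.pp h' y, hNPh y hy⟩ : {p // NP m p})) = _
    rw [dif_neg hy]; rfl
  obtain ⟨ψ, hψpe, hψpp⟩ : ∃ ψ : H' ⟶ Hsub m,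
      (∀ y, OHom.pe ψ y = ψE y) ∧ (∀ y, OHom.pp ψ y = ψP y) := by
    refine ⟨⟨⟨⟨ψE, ψP, ?_, ?_⟩, ?_, ?_⟩, ?_⟩, fun _ => rfl, fun _ => rfl⟩
    · -- hs
      intro y
      show Hsrc m (ψE y) = ψP (H'.X.G.s y)
      rcases Hsrc_cases m (ψE y) with ⟨q, hq, hpq, heq⟩ | ⟨hnp, heq⟩
      · rw [heq]
        have h1 : OHom.pp m q = OHom.pp h' (H'.X.G.s y) := hpq.trans (mhs h' y)
        have h2 : rho c' q = Sum.inl (H'.X.G.s y) := hαPinj (by rw [hαGP, hαHP]; exact h1)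
        have hni : ¬ IsInput G q := fun hin => hiso q ⟨hin, hq⟩
        unfold rho at h2
        rw [dif_neg hni, dif_pos hq] at h2
        rw [hψP1 _ _ (Sum.inl.inj h2)]; rfl
      · rw [heq]
        have hy : ¬ ∃ q, OHom.pp c' q = H'.X.G.s y := by
          rintro ⟨q, hq⟩
          apply hnp
          refine ⟨Sum.elim Subtype.val Subtype.val q, ?_⟩
          show OHom.pp m _ = M.X.G.s (OHom.pe h' y)
          rw [hw q, hq, ← mhs h' y]
        rw [hψP2 _ hy]
        exact congrArg Sum.inl (Subtype.ext (mhs h' y))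
    · -- ht
      intro y
      show Htgt m (ψE y) = ψP (H'.X.G.t y)
      rcases Htgt_cases m (ψE y) with ⟨q, hq, hpq, heq⟩ | ⟨hnp, heq⟩
      · rw [heq]
        have h1 : OHom.pp m q = OHom.pp h' (H'.X.G.t y) := hpq.trans (mht h' y)
        have h2 : rho c' q = Sum.inl (H'.X.G.t y) := hαPinj (by rw [hαGP, hαHP]; exact h1)
        unfold rho at h2
        rw [dif_pos hq] at h2
        rw [hψP1 _ _ (Sum.inl.inj h2)]; rfl
      · rw [heq]
        have hy : ¬ ∃ q, OHom.pp c' q = H'.X.G.t y := by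
          rintro ⟨q, hq⟩
          apply hnp
          refine ⟨Sum.elim Subtype.val Subtype.val q, ?_⟩
          show OHom.pp m _ = M.X.G.t (OHom.pe h' y)
          rw [hw q, hq, ← mht h' y]
        rw [hψP2 _ hy]
        exact congrArg Sum.inl (Subtype.ext (mht h' y))
    · -- comm_pp
      intro y
      show Sum.elim (fun p => M.X.τ.pp p.val) (fun _ => TyP.eps) (ψP y) = H'.X.τ.pp y
      by_cases hy : ∃ q, OHom.pp c' q = y
      · obtain ⟨q, hq⟩ := hy
        rw [hψP1 _ _ hq]
        show TyP.eps = H'.X.τ.pp y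
        rw [← hq, mcpp c']
        rfl
      · rw [hψP2 _ hy]
        show M.X.τ.pp (OHom.pp h' y) = H'.X.τ.pp y
        exact mcpp h' y
    · -- comm_pe
      intro y
      show M.X.τ.pe (OHom.pe h' y) = H'.X.τ.pe y
      exact mcpe h' y
    · -- fullness
      intro y hv e he
      have hy : ¬ ∃ q, OHom.pp c' q = y := by
        rintro ⟨q, hq⟩
        rw [← hq, mcpp c'] at hv
        cases hv
      replace he : Hsrc m e = ψP y ∨ Htgt m e = ψP y := he
      rw [hψP2 _ hy] at he
      have hadj : M.X.G.s e.val = OHom.pp h' y ∨ M.X.G.t e.val = OHom.pp h' y := by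
        rcases he with he | he
        · exact Or.inl (Hsrc_inl m he)
        · exact Or.inr (Htgt_inl m he)
      obtain ⟨g, hg1, hg2⟩ := h'.full y hv e.val hadj
      exact ⟨g, Subtype.ext hg1, hg2⟩
  -- the isomorphism
  have hfi : φ ≫ ψ = 𝟙 (Hsub m) := by
    apply ohom_ext
    · intro e
      show OHom.pe ψ (OHom.pe φ e) = e
      rw [hφpe, hψpe]
      exact Subtype.ext (hφE e)
    · rintro (⟨p0, hnp⟩ | bq)
      · show OHom.pp ψ (OHom.pp φ (Sum.inl ⟨p0, hnp⟩)) = Sum.inl ⟨p0, hnp⟩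
        erw [hφpp, hψpp]
        have hy : ¬ ∃ q, OHom.pp c' q = φP (Sum.inl ⟨p0, hnp⟩) := by
          rintro ⟨q, hq⟩
          apply hnp
          exact ⟨Sum.elim Subtype.val Subtype.val q, by rw [hw q, hq, hφP1 _ hnp]⟩
        rw [hψP2 _ hy]
        exact congrArg Sum.inl (Subtype.ext (hφP1 _ hnp))
      · show OHom.pp ψ (OHom.pp φ (Sum.inr bq)) = Sum.inr bq
        erw [hφpp, hψpp]
        exact hψP1 _ bq rfl
  have hif : ψ ≫ φ = 𝟙 H' := by
    apply ohom_ext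
    · intro y
      show OHom.pe φ (OHom.pe ψ y) = y
      erw [hψpe, hφpe]
      exact hh'Einj _ _ (hφE (ψE y))
    · intro y
      show OHom.pp φ (OHom.pp ψ y) = y
      rw [hψpp]
      by_cases hy : ∃ q, OHom.pp c' q = y
      · obtain ⟨q, hq⟩ := hy
        erw [hψP1 _ _ hq, hφpp]
        exact hq
      · erw [hψP2 _ hy, hφpp]
        apply hh'Pinj
        rw [hφP1]
  refine ⟨⟨φ, ψ, hfi, hif⟩, ?_, ?_⟩
  · apply ohom_ext
    · exact fun e => e.elim
    · intro q
      show OHom.pp φ (Sum.inr q) = OHom.pp c' q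
      erw [hφpp]
  · apply ohom_ext
    · intro e
      show OHom.pe h' (OHom.pe φ e) = e.val
      rw [hφpe]
      exact hφE e
    · rintro (⟨p0, hnp⟩ | bq)
      · show OHom.pp h' (OHom.pp φ (Sum.inl ⟨p0, hnp⟩)) = p0
        erw [hφpp]
        exact hφP1 _ hnp
      · show OHom.pp h' (OHom.pp φ (Sum.inr bq)) = OHom.pp m (Sum.elim Subtype.val Subtype.val bq)
        erw [hφpp]
        exact (hw bq).symm
end SubtractionProof
/-- For a monomorphism `m : G ⟶ M` of open-graphs where `G` has no isolated points,
the subtraction `M − G` yields an `S`-adhesive pushout complement of the boundary map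
`b : B ⟶ G` and `m`: there exist `H`, a coboundary `c : B ⟶ H` and an embedding
`h : H ⟶ M` with the square `(b, c, m, h)` an `S`-adhesive pushout (a plugging of `G`
and `H` along `(b, c)` recovering `M`), and `H` is unique up to isomorphism with this
property. -/
theorem subtraction_sAdhesive_pushoutComplement {G M : OGraph} (m : G ⟶ M) (hm : Mono m)
    (hiso : ∀ p, ¬ IsIsolated G p) :
    ∃ (H : OGraph) (c : boundaryGraph G ⟶ H) (h : H ⟶ M),
      IsPushout (boundaryMap G) c m h ∧
      IsPushout (S.map (boundaryMap G)) (S.map c) (S.map m) (S.map h) ∧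
      ∀ (H' : OGraph) (c' : boundaryGraph G ⟶ H') (h' : H' ⟶ M),
        IsPushout (boundaryMap G) c' m h' →
        IsPushout (S.map (boundaryMap G)) (S.map c') (S.map m) (S.map h') →
        ∃ φ : H ≅ H', c ≫ φ.hom = c' ∧ φ.hom ≫ h' = h := by
  classical
  have injpp := SubtractionProof.mono_pp_inj m hm
  have injpe := SubtractionProof.mono_pe_inj m hm
  refine ⟨SubtractionProof.Hsub m, SubtractionProof.csub m, SubtractionProof.hsub m,
    SubtractionProof.hpoO m injpp injpe, SubtractionProof.hpoT m injpp injpe, ?_⟩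
  intro H' c' h' _ hp'S
  exact SubtractionProof.complement_unique m hm hiso H' c' h' hp'S
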